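/- De Jongh–Sambin fixed-point theorem for propositional K + □^{n+1}⊥, with an explicit algorithm: if a propositional modal formula A(p) is modalized in p, then the formula A_n, defined recursively by A_0 := A^{⊤(0)} and A_{k+1} := A^{⊤(k+1)}(p)[⊤, A_k, …, A_0], satisfies K + □^{n+1}⊥ ⊢ A_n ↔ A(A_n), and A_n contains only propositional variables of A(p) other than p. -/

import Mathlib

namespace PropML

/-- Propositional modal formulas. -/
inductive PF : Type
  | verum : PF
  | falsum : PF
  | pvar (q : ℕ) : PF
  | neg (A : PF) : PF
  | imp (A B : PF) : PF
  | box (A : PF) : PF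

namespace PF

def land (A B : PF) : PF := (A.imp B.neg).neg

def iff (A B : PF) : PF := (A.imp B).land (B.imp A)

def boxIter : ℕ → PF → PF
  | 0, A => A
  | n + 1, A => (boxIter n A).box

def pvars : PF → Finset ℕ
  | pvar q => {q}
  | neg A => A.pvars
  | imp A B => A.pvars ∪ B.pvars
  | box A => A.pvars
  | _ => ∅

/-- Substitution of a formula for a propositional variable. -/
def psub : PF → ℕ → PF → PF
  | pvar q, p, B => if q = p then B else pvar q
  | neg A, p, B => (A.psub p B).neg
  | imp A C, p, B => (A.psub p B).imp (C.psub p B)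
  | box A, p, B => (A.psub p B).box
  | A, _, _ => A

/-- Depth-indexed substitution of `σ i` for occurrences of `p` at modal depth `i`. -/
def dsub : PF → ℕ → (ℕ → PF) → PF
  | pvar q, p, σ => if q = p then σ 0 else pvar q
  | neg A, p, σ => (A.dsub p σ).neg
  | imp A C, p, σ => (A.dsub p σ).imp (C.dsub p σ)
  | box A, p, σ => (A.dsub p (fun i => σ (i + 1))).box
  | A, _, _ => A

/-- `A^{⊤(n)}`: replace boxed subformulas at modal depth `n` by ⊤. -/
def eraseT : ℕ → PF → PF
  | 0, box _ => verum
  | n + 1, box A => (eraseT n A).box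
  | n, neg A => (eraseT n A).neg
  | n, imp A B => (eraseT n A).imp (eraseT n B)
  | _, A => A

def occursAt (p : ℕ) : PF → ℕ → Prop
  | pvar q, d => q = p ∧ d = 0
  | neg A, d => occursAt p A d
  | imp A B, d => occursAt p A d ∨ occursAt p B d
  | box A, d => ∃ d', d = d' + 1 ∧ occursAt p A d'
  | _, _ => False

def Modalized (p : ℕ) (A : PF) : Prop := ¬ occursAt p A 0

/-- `A_0 := A^{⊤(0)}(p)[⊤]`, `A_{k+1} := A^{⊤(k+1)}(p)[⊤, A_k, …, A_0]`. -/
def fpSeq (p : ℕ) (A : PF) : ℕ → PF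
  | 0 => (eraseT 0 A).dsub p (fun _ => verum)
  | n + 1 => (eraseT (n + 1) A).dsub p
      (fun i => match i with
        | 0 => verum
        | j + 1 => fpSeq p A (n - j))
  termination_by k => k
  decreasing_by omega

end PF

open PF

/-- Axioms of classical propositional logic and the distribution axiom K. -/
inductive KAx : PF → Prop
  | imp1 (A B : PF) : KAx (A.imp (B.imp A))
  | imp2 (A B C : PF) : KAx ((A.imp (B.imp C)).imp ((A.imp B).imp (A.imp C)))
  | contra (A B : PF) : KAx ((A.neg.imp B.neg).imp (B.imp A))
  | verum : KAx PF.verum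
  | exfalso (A : PF) : KAx (PF.falsum.imp A)
  | negE (A : PF) : KAx (A.neg.imp (A.imp PF.falsum))
  | negI (A : PF) : KAx ((A.imp PF.falsum).imp A.neg)
  | k (A B : PF) : KAx (((A.imp B).box).imp (A.box.imp B.box))

/-- Provability in a normal modal logic extending K by the axioms `Ext`. -/
inductive KPrf (Ext : PF → Prop) : PF → Prop
  | ax {A : PF} : KAx A → KPrf Ext A
  | ext {A : PF} : Ext A → KPrf Ext A
  | mp {A B : PF} : KPrf Ext (A.imp B) → KPrf Ext A → KPrf Ext B
  | nec {A : PF} : KPrf Ext A → KPrf Ext A.box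

/-- Provability in K + □^{n+1}⊥. -/
def Kn (n : ℕ) : PF → Prop := KPrf (fun B => B = boxIter (n + 1) PF.falsum)

end PropML
namespace PropML
open PF

/-! ### Derivations from hypotheses (deduction theorem toolkit) -/

inductive Der (S : PF → Prop) : List PF → PF → Prop
  | ax {Γ A} : KAx A → Der S Γ A
  | ex {Γ A} : S A → Der S Γ A
  | hyp {Γ A} : A ∈ Γ → Der S Γ A
  | mp {Γ A B} : Der S Γ (A.imp B) → Der S Γ A → Der S Γ B

theorem Der.id {S : PF → Prop} {Γ : List PF} {A : PF} : Der S Γ (A.imp A) :=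
  .mp (.mp (.ax (KAx.imp2 A (A.imp A) A)) (.ax (KAx.imp1 A (A.imp A)))) (.ax (KAx.imp1 A A))

theorem Der.ded' {S : PF → Prop} {Δ : List PF} {B : PF} (h : Der S Δ B) :
    ∀ A Γ, Δ = A :: Γ → Der S Γ (A.imp B) := by
  induction h with
  | ax h => exact fun A Γ _ => .mp (.ax (KAx.imp1 _ _)) (.ax h)
  | ex h => exact fun A Γ _ => .mp (.ax (KAx.imp1 _ _)) (.ex h)
  | hyp h =>
    intro A Γ e
    subst e
    rcases List.mem_cons.1 h with rfl | h
    · exact Der.id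
    · exact .mp (.ax (KAx.imp1 _ _)) (.hyp h)
  | mp _ _ ih1 ih2 =>
    intro A Γ e
    exact .mp (.mp (.ax (KAx.imp2 _ _ _)) (ih1 A Γ e)) (ih2 A Γ e)

theorem Der.ded {S : PF → Prop} {Γ : List PF} {A B : PF} (h : Der S (A :: Γ) B) : Der S Γ (A.imp B) :=
  h.ded' A Γ rfl

theorem Der.h0 {S : PF → Prop} {Γ : List PF} {A : PF} : Der S (A :: Γ) A := .hyp (.head _)
theorem Der.h1 {S : PF → Prop} {Γ : List PF} {A B : PF} : Der S (A :: B :: Γ) B := .hyp (.tail _ (.head _))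
theorem Der.h2 {S : PF → Prop} {Γ : List PF} {A B C : PF} : Der S (A :: B :: C :: Γ) C :=
  .hyp (.tail _ (.tail _ (.head _)))

theorem Der.toK {Ext : PF → Prop} {Γ : List PF} {B : PF} (h : Der (KPrf Ext) Γ B)
    (hΓ : ∀ C, C ∈ Γ → KPrf Ext C) : KPrf Ext B := by
  induction h with
  | ax h => exact .ax h
  | ex h => exact h
  | hyp h => exact hΓ _ h
  | mp _ _ ih1 ih2 => exact .mp ih1 ih2

theorem ofDer {Ext : PF → Prop} {B : PF} (h : Der (KPrf Ext) [] B) : KPrf Ext B :=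
  h.toK (by simp)

/-! ### Propositional tautologies -/

section Taut
variable {Ext : PF → Prop}

theorem kId (A : PF) : KPrf Ext (A.imp A) := ofDer Der.id

theorem th_dni (A : PF) : KPrf Ext (A.imp A.neg.neg) :=
  ofDer <| .ded <| .mp (.ax (KAx.negI _)) <| .ded <|
    .mp (.mp (.ax (KAx.negE A)) Der.h0) Der.h1

theorem th_dne (A : PF) : KPrf Ext (A.neg.neg.imp A) :=
  .mp (.ax (KAx.contra A A.neg.neg)) (th_dni A.neg)

theorem Der.bc {Ext : PF → Prop} {Γ : List PF} {A : PF} (h : Der (KPrf Ext) (A.neg :: Γ) PF.falsum) :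
    Der (KPrf Ext) Γ A :=
  .mp (.ex (th_dne A)) (.mp (.ax (KAx.negI _)) h.ded)

theorem th_andE1 (A B : PF) : KPrf Ext ((A.land B).imp A) :=
  ofDer <| .ded <| .bc <|
    .mp (.mp (.ax (KAx.negE (A.imp B.neg))) Der.h1) <|
      .ded (.mp (.ax (KAx.exfalso B.neg)) (.mp (.mp (.ax (KAx.negE A)) Der.h1) Der.h0))

theorem th_andE2 (A B : PF) : KPrf Ext ((A.land B).imp B) :=
  ofDer <| .ded <| .bc <|
    .mp (.mp (.ax (KAx.negE (A.imp B.neg))) Der.h1) <|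
      .mp (.ax (KAx.imp1 B.neg A)) Der.h0

theorem th_andI (A B : PF) : KPrf Ext (A.imp (B.imp (A.land B))) :=
  ofDer <| .ded <| .ded <| .mp (.ax (KAx.negI _)) <| .ded <|
    .mp (.mp (.ax (KAx.negE B)) (.mp Der.h0 Der.h2)) Der.h1

theorem th_syl (A B C : PF) : KPrf Ext ((A.imp B).imp ((B.imp C).imp (A.imp C))) :=
  ofDer <| .ded <| .ded <| .ded <| .mp Der.h1 (.mp Der.h2 Der.h0)

theorem th_swap (A B C : PF) : KPrf Ext ((A.imp (B.imp C)).imp (B.imp (A.imp C))) :=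
  ofDer <| .ded <| .ded <| .ded <| .mp (.mp Der.h2 Der.h0) Der.h1

theorem th_iffI (A B : PF) : KPrf Ext ((A.imp B).imp ((B.imp A).imp (A.iff B))) :=
  th_andI (A.imp B) (B.imp A)

theorem th_iff1 (A B : PF) : KPrf Ext ((A.iff B).imp (A.imp B)) := th_andE1 _ _

theorem th_iff2 (A B : PF) : KPrf Ext ((A.iff B).imp (B.imp A)) := th_andE2 _ _

theorem iffI {A B : PF} (h1 : KPrf Ext (A.imp B)) (h2 : KPrf Ext (B.imp A)) :
    KPrf Ext (A.iff B) := .mp (.mp (th_iffI A B) h1) h2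

theorem iffRefl (A : PF) : KPrf Ext (A.iff A) := iffI (kId A) (kId A)

theorem th_iffSymm (A B : PF) : KPrf Ext ((A.iff B).imp (B.iff A)) :=
  ofDer <| .ded <|
    .mp (.mp (.ex (th_iffI B A)) (.mp (.ex (th_iff2 A B)) Der.h0))
      (.mp (.ex (th_iff1 A B)) Der.h0)

theorem th_iffTrans (A B C : PF) :
    KPrf Ext ((A.iff B).imp ((B.iff C).imp (A.iff C))) :=
  ofDer <| .ded <| .ded <|
    .mp
      (.mp (.ex (th_iffI A C))
        (.mp (.mp (.ex (th_syl A B C)) (.mp (.ex (th_iff1 A B)) Der.h1))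
          (.mp (.ex (th_iff1 B C)) Der.h0)))
      (.mp (.mp (.ex (th_syl C B A)) (.mp (.ex (th_iff2 B C)) Der.h0))
        (.mp (.ex (th_iff2 A B)) Der.h1))

theorem th_contrap (A B : PF) : KPrf Ext ((A.imp B).imp (B.neg.imp A.neg)) :=
  ofDer <| .ded <| .ded <| .mp (.ax (KAx.negI A)) <| .ded <|
    .mp (.mp (.ax (KAx.negE B)) Der.h1) (.mp Der.h2 Der.h0)

theorem th_congNeg (A B : PF) : KPrf Ext ((A.iff B).imp (A.neg.iff B.neg)) :=
  ofDer <| .ded <|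
    .mp
      (.mp (.ex (th_iffI A.neg B.neg))
        (.mp (.ex (th_contrap B A)) (.mp (.ex (th_iff2 A B)) Der.h0)))
      (.mp (.ex (th_contrap A B)) (.mp (.ex (th_iff1 A B)) Der.h0))

theorem th_congImp (A B C D : PF) :
    KPrf Ext ((A.iff B).imp ((C.iff D).imp ((A.imp C).iff (B.imp D)))) :=
  ofDer <| .ded <| .ded <| by
    refine .mp (.mp (.ex (th_iffI _ _)) ?_) ?_
    · -- (A.imp C).imp (B.imp D)
      refine .mp (.mp (.ex (th_syl (A.imp C) (B.imp C) (B.imp D))) ?_) ?_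
      · exact .mp (.ex (th_syl B A C)) (.mp (.ex (th_iff2 A B)) Der.h1)
      · exact .mp (.mp (.ex (th_swap (B.imp C) (C.imp D) (B.imp D)))
          (.ex (th_syl B C D))) (.mp (.ex (th_iff1 C D)) Der.h0)
    · -- (B.imp D).imp (A.imp C)
      refine .mp (.mp (.ex (th_syl (B.imp D) (A.imp D) (A.imp C))) ?_) ?_
      · exact .mp (.ex (th_syl A B D)) (.mp (.ex (th_iff1 A B)) Der.h1)
      · exact .mp (.mp (.ex (th_swap (A.imp D) (D.imp C) (A.imp C)))
          (.ex (th_syl A D C))) (.mp (.ex (th_iff2 C D)) Der.h0)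

theorem th_verumIff (B : PF) : KPrf Ext (B.imp (PF.verum.iff B)) :=
  ofDer <| .ded <|
    .mp (.mp (.ex (th_iffI PF.verum B)) (.mp (.ax (KAx.imp1 B PF.verum)) Der.h0))
      (.mp (.ax (KAx.imp1 PF.verum B)) (.ax KAx.verum))

theorem th_boxCong (A B : PF) :
    KPrf Ext (((A.iff B).box).imp ((A.box).iff (B.box))) := by
  have p1 : KPrf Ext (((A.iff B).box).imp ((A.imp B).box)) :=
    .mp (.ax (KAx.k _ _)) (.nec (th_iff1 A B))
  have p2 : KPrf Ext (((A.iff B).box).imp ((B.imp A).box)) :=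
    .mp (.ax (KAx.k _ _)) (.nec (th_iff2 A B))
  exact ofDer <| .ded <|
    .mp
      (.mp (.ex (th_iffI _ _)) (.mp (.ax (KAx.k A B)) (.mp (.ex p1) Der.h0)))
      (.mp (.ax (KAx.k B A)) (.mp (.ex p2) Der.h0))

end Taut

end PropML
namespace PropML
open PF

/-! ### Iterated boxes -/

theorem boxIter_box (j : ℕ) (A : PF) : boxIter j A.box = boxIter (j + 1) A := by
  induction j with
  | zero => rfl
  | succ j ih => simp [boxIter, ih]

section Modal
variable {Ext : PF → Prop}

theorem necIter (j : ℕ) {A : PF} (h : KPrf Ext A) : KPrf Ext (boxIter j A) := by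
  induction j with
  | zero => exact h
  | succ j ih => exact ih.nec

theorem mpIter (j : ℕ) {A B : PF} (h1 : KPrf Ext (boxIter j (A.imp B)))
    (h2 : KPrf Ext (boxIter j A)) : KPrf Ext (boxIter j B) := by
  induction j generalizing A B with
  | zero => exact h1.mp h2
  | succ j ih =>
    rw [← boxIter_box] at h1 h2 ⊢
    exact ih (ih (necIter j (.ax (KAx.k A B))) h1) h2

theorem iffReflB (j : ℕ) (A : PF) : KPrf Ext (boxIter j (A.iff A)) :=
  necIter j (iffRefl A)

theorem transB (j : ℕ) {A B C : PF} (h1 : KPrf Ext (boxIter j (A.iff B)))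
    (h2 : KPrf Ext (boxIter j (B.iff C))) : KPrf Ext (boxIter j (A.iff C)) :=
  mpIter j (mpIter j (necIter j (th_iffTrans A B C)) h1) h2

theorem symmB (j : ℕ) {A B : PF} (h : KPrf Ext (boxIter j (A.iff B))) :
    KPrf Ext (boxIter j (B.iff A)) :=
  mpIter j (necIter j (th_iffSymm A B)) h

theorem congNegB (j : ℕ) {A B : PF} (h : KPrf Ext (boxIter j (A.iff B))) :
    KPrf Ext (boxIter j (A.neg.iff B.neg)) :=
  mpIter j (necIter j (th_congNeg A B)) h

theorem congImpB (j : ℕ) {A B C D : PF} (h1 : KPrf Ext (boxIter j (A.iff B)))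
    (h2 : KPrf Ext (boxIter j (C.iff D))) :
    KPrf Ext (boxIter j ((A.imp C).iff (B.imp D))) :=
  mpIter j (mpIter j (necIter j (th_congImp A B C D)) h1) h2

theorem verumIffB (j : ℕ) {B : PF} (h : KPrf Ext (boxIter j B)) :
    KPrf Ext (boxIter j (PF.verum.iff B)) :=
  mpIter j (necIter j (th_verumIff B)) h

theorem boxCongB (j : ℕ) {A B : PF} (h : KPrf Ext (boxIter (j + 1) (A.iff B))) :
    KPrf Ext (boxIter j ((A.box).iff (B.box))) :=
  mpIter j (necIter j (th_boxCong A B)) (by rw [boxIter_box]; exact h)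

end Modal

/-! ### K + □^{n+1}⊥ -/

theorem boxBotAdd (n : ℕ) : ∀ d, Kn n (boxIter (n + 1 + d) PF.falsum)
  | 0 => KPrf.ext rfl
  | d + 1 => KPrf.nec (boxBotAdd n d)

theorem deepAny (n t : ℕ) (A : PF) (ht : n + 1 ≤ t) : Kn n (boxIter t A) := by
  obtain ⟨d, rfl⟩ := Nat.exists_eq_add_of_le ht
  exact mpIter _ (necIter _ (.ax (KAx.exfalso A))) (boxBotAdd n d)

/-! ### Structural lemmas -/

theorem eraseT_atom (m : ℕ) :
    eraseT m PF.verum = PF.verum ∧ eraseT m PF.falsum = PF.falsum ∧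
      ∀ q, eraseT m (pvar q) = pvar q := by
  cases m <;> exact ⟨rfl, rfl, fun _ => rfl⟩

theorem eraseT_neg (m : ℕ) (A : PF) : eraseT m A.neg = (eraseT m A).neg := by
  cases m <;> rfl

theorem eraseT_imp (m : ℕ) (A B : PF) :
    eraseT m (A.imp B) = (eraseT m A).imp (eraseT m B) := by
  cases m <;> rfl

theorem psub_eq_dsub (p : ℕ) (B A : PF) : A.psub p B = A.dsub p (fun _ => B) := by
  induction A with
  | verum => rfl
  | falsum => rfl
  | pvar q => rfl
  | neg A ih => simp [psub, dsub, ih]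
  | imp A C ih1 ih2 => simp [psub, dsub, ih1, ih2]
  | box A ih => simp [psub, dsub, ih]

theorem dsub_congrOcc (p : ℕ) (B : PF) : ∀ (σ τ : ℕ → PF),
    (∀ i, occursAt p B i → σ i = τ i) → B.dsub p σ = B.dsub p τ := by
  induction B with
  | verum => intros; rfl
  | falsum => intros; rfl
  | pvar q =>
    intro σ τ h
    by_cases hq : q = p
    · simp only [dsub, if_pos hq]
      exact h 0 (by simp [occursAt, hq])
    · simp [dsub, hq]
  | neg A ih =>
    intro σ τ h
    simp only [dsub]
    rw [ih σ τ (fun i hi => h i hi)]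
  | imp A C ih1 ih2 =>
    intro σ τ h
    simp only [dsub]
    rw [ih1 σ τ (fun i hi => h i (Or.inl hi)), ih2 σ τ (fun i hi => h i (Or.inr hi))]
  | box A ih =>
    intro σ τ h
    simp only [dsub]
    rw [ih _ _ (fun i hi => h (i + 1) ⟨i, rfl, hi⟩)]

theorem eraseT_eraseT (B : PF) : ∀ (k m : ℕ), k ≤ m →
    eraseT k (eraseT m B) = eraseT k B := by
  induction B with
  | verum => intro k m _; rw [(eraseT_atom m).1, (eraseT_atom k).1]
  | falsum => intro k m _; rw [(eraseT_atom m).2.1, (eraseT_atom k).2.1]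
  | pvar q => intro k m _; rw [(eraseT_atom m).2.2 q, (eraseT_atom k).2.2 q]
  | neg A ih => intro k m h; rw [eraseT_neg, eraseT_neg, eraseT_neg, ih k m h]
  | imp A C ih1 ih2 =>
    intro k m h
    rw [eraseT_imp, eraseT_imp, eraseT_imp, ih1 k m h, ih2 k m h]
  | box A ih =>
    intro k m h
    match m, k, h with
    | 0, 0, _ => rfl
    | m + 1, 0, _ => rfl
    | m + 1, k + 1, h => show box _ = box _; rw [ih k m (by omega)]

theorem occursAt_eraseT (q : ℕ) (B : PF) : ∀ (k d : ℕ),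
    occursAt q (eraseT k B) d → occursAt q B d ∧ d ≤ k := by
  induction B with
  | verum => intro k d h; rw [(eraseT_atom k).1] at h; exact absurd h (by simp [occursAt])
  | falsum => intro k d h; rw [(eraseT_atom k).2.1] at h; exact absurd h (by simp [occursAt])
  | pvar r =>
    intro k d h
    rw [(eraseT_atom k).2.2 r] at h
    obtain ⟨h1, h2⟩ := h
    exact ⟨⟨h1, h2⟩, by omega⟩
  | neg A ih => intro k d h; rw [eraseT_neg] at h; exact ih k d h
  | imp A C ih1 ih2 =>
    intro k d h
    rw [eraseT_imp] at h
    rcases h with h | h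
    · exact ⟨Or.inl (ih1 k d h).1, (ih1 k d h).2⟩
    · exact ⟨Or.inr (ih2 k d h).1, (ih2 k d h).2⟩
  | box A ih =>
    intro k d h
    match k with
    | 0 => exact absurd h (fun h' => (h' : False))
    | k + 1 =>
      obtain ⟨d', rfl, h⟩ := h
      obtain ⟨h1, h2⟩ := ih k d' h
      exact ⟨⟨d', rfl, h1⟩, by omega⟩

theorem pvars_eraseT (B : PF) : ∀ k, (eraseT k B).pvars ⊆ B.pvars := by
  induction B with
  | verum => intro k; rw [(eraseT_atom k).1]
  | falsum => intro k; rw [(eraseT_atom k).2.1]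
  | pvar q => intro k; rw [(eraseT_atom k).2.2 q]
  | neg A ih => intro k; rw [eraseT_neg]; exact ih k
  | imp A C ih1 ih2 =>
    intro k
    rw [eraseT_imp]
    exact Finset.union_subset_union (ih1 k) (ih2 k)
  | box A ih =>
    intro k
    match k with
    | 0 => simp [eraseT, pvars]
    | k + 1 => exact ih k

theorem pvars_dsub (p : ℕ) (B : PF) : ∀ (σ : ℕ → PF) (S : Finset ℕ),
    (∀ i, (σ i).pvars ⊆ S) → B.pvars.erase p ⊆ S → (B.dsub p σ).pvars ⊆ S := by
  induction B with
  | verum => intro σ S _ _; simp [dsub, pvars]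
  | falsum => intro σ S _ _; simp [dsub, pvars]
  | pvar q =>
    intro σ S hσ hB
    by_cases hq : q = p
    · simpa [dsub, hq] using hσ 0
    · simp only [dsub, if_neg hq]
      intro x hx
      simp only [pvars, Finset.mem_singleton] at hx
      subst hx
      exact hB (Finset.mem_erase.2 ⟨hq, by simp [pvars]⟩)
  | neg A ih => intro σ S hσ hB; exact ih σ S hσ hB
  | imp A C ih1 ih2 =>
    intro σ S hσ hB
    simp only [dsub, pvars]
    apply Finset.union_subset
    · exact ih1 σ S hσ (fun x hx => hB (by simp [pvars, Finset.mem_erase] at hx ⊢; tauto))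
    · exact ih2 σ S hσ (fun x hx => hB (by simp [pvars, Finset.mem_erase] at hx ⊢; tauto))
  | box A ih =>
    intro σ S hσ hB
    exact ih _ S (fun i => hσ (i + 1)) hB

end PropML
namespace PropML
open PF

theorem fpSeq_zero (p : ℕ) (A : PF) :
    fpSeq p A 0 = (eraseT 0 A).dsub p (fun _ => PF.verum) := by
  rw [fpSeq]

theorem fpSeq_succ (p : ℕ) (A : PF) (m : ℕ) :
    fpSeq p A (m + 1) = (eraseT (m + 1) A).dsub p
      (fun i => match i with
        | 0 => PF.verum
        | j + 1 => fpSeq p A (m - j)) := by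
  rw [fpSeq]

/-- Uniform substitution used at stage `k`. -/
def sig (p : ℕ) (A : PF) (k : ℕ) : ℕ → PF :=
  fun i => if i = 0 then PF.verum else fpSeq p A (k - i)

theorem fpSeq_eq (p : ℕ) (A : PF) : ∀ k, fpSeq p A k = (eraseT k A).dsub p (sig p A k) := by
  intro k
  cases k with
  | zero =>
    rw [fpSeq_zero]
    apply dsub_congrOcc
    intro i hi
    have h := (occursAt_eraseT p A 0 i hi).2
    interval_cases i
    simp [sig]
  | succ m =>
    rw [fpSeq_succ]
    apply dsub_congrOcc
    intro i _
    match i with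
    | 0 => simp [sig]
    | j + 1 => simp [sig, Nat.succ_sub_succ]

/-- Erasing at depth `m` is harmless under `j` boxes, provided `n ≤ j + m`. -/
theorem eraseT_iff (n p : ℕ) : ∀ (B : PF) (j m : ℕ) (σ : ℕ → PF), n ≤ j + m →
    Kn n (boxIter j (((eraseT m B).dsub p σ).iff (B.dsub p σ))) := by
  intro B
  induction B with
  | verum => intro j m σ _; rw [(eraseT_atom m).1]; exact iffReflB j _
  | falsum => intro j m σ _; rw [(eraseT_atom m).2.1]; exact iffReflB j _
  | pvar q => intro j m σ _; rw [(eraseT_atom m).2.2 q]; exact iffReflB j _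
  | neg A ih =>
    intro j m σ h
    rw [eraseT_neg]
    exact congNegB j (ih j m σ h)
  | imp A C ih1 ih2 =>
    intro j m σ h
    rw [eraseT_imp]
    exact congImpB j (ih1 j m σ h) (ih2 j m σ h)
  | box A ih =>
    intro j m σ h
    match m with
    | 0 =>
      show Kn n (boxIter j ((PF.verum.dsub p σ).iff _))
      apply verumIffB j
      show Kn n (boxIter j ((A.dsub p fun i => σ (i + 1)).box))
      rw [boxIter_box]
      exact deepAny n (j + 1) _ (by omega)
    | m + 1 =>
      show Kn n (boxIter j ((((eraseT m A).dsub p fun i => σ (i + 1)).box).iff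
        ((A.dsub p fun i => σ (i + 1)).box)))
      exact boxCongB j (ih (j + 1) m _ (by omega))

/-- Depth-aware congruence for `dsub`. -/
theorem dsub_iff (n p : ℕ) : ∀ (B : PF) (j : ℕ) (σ τ : ℕ → PF),
    (∀ i, occursAt p B i → Kn n (boxIter (j + i) ((σ i).iff (τ i)))) →
    Kn n (boxIter j ((B.dsub p σ).iff (B.dsub p τ))) := by
  intro B
  induction B with
  | verum => intro j σ τ _; exact iffReflB j _
  | falsum => intro j σ τ _; exact iffReflB j _
  | pvar q =>
    intro j σ τ h
    by_cases hq : q = p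
    · simp only [dsub, if_pos hq]
      have := h 0 ⟨hq, rfl⟩
      simpa using this
    · simp only [dsub, if_neg hq]
      exact iffReflB j _
  | neg A ih =>
    intro j σ τ h
    exact congNegB j (ih j σ τ h)
  | imp A C ih1 ih2 =>
    intro j σ τ h
    exact congImpB j (ih1 j σ τ (fun i hi => h i (Or.inl hi)))
      (ih2 j σ τ (fun i hi => h i (Or.inr hi)))
  | box A ih =>
    intro j σ τ h
    apply boxCongB j
    apply ih (j + 1) _ _
    intro i hi
    have := h (i + 1) ⟨i, rfl, hi⟩
    rwa [show j + (i + 1) = (j + 1) + i by omega] at this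

/-- The fixed-point approximants agree under enough boxes. -/
theorem fp_agree (n p : ℕ) (A : PF) (hmod : Modalized p A) :
    ∀ k m, k ≤ m → m ≤ n →
      Kn n (boxIter (n - k) ((fpSeq p A k).iff (fpSeq p A m))) := by
  intro k
  induction k using Nat.strong_induction_on with
  | _ k ih =>
    intro m hkm hmn
    rcases eq_or_lt_of_le hkm with rfl | hlt
    · exact iffReflB _ _
    · rw [fpSeq_eq, fpSeq_eq]
      have s1 : Kn n (boxIter (n - k)
          (((eraseT k A).dsub p (sig p A m)).iff ((eraseT m A).dsub p (sig p A m)))) := by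
        have h := eraseT_iff n p (eraseT m A) (n - k) k (sig p A m) (by omega)
        rwa [eraseT_eraseT A k m (le_of_lt hlt)] at h
      have s2 : Kn n (boxIter (n - k)
          (((eraseT k A).dsub p (sig p A k)).iff ((eraseT k A).dsub p (sig p A m)))) := by
        apply dsub_iff
        intro i hi
        obtain ⟨hiA, hik⟩ := occursAt_eraseT p A k i hi
        match i with
        | 0 => exact absurd hiA hmod
        | i + 1 =>
          have h := ih (k - (i + 1)) (by omega) (m - (i + 1)) (by omega) (by omega)
          rw [show n - (k - (i + 1)) = (n - k) + (i + 1) by omega] at h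
          simpa [sig] using h
      exact transB _ s2 s1

theorem fpSeq_pvars (n p : ℕ) (A : PF) : ∀ k, (fpSeq p A k).pvars ⊆ A.pvars.erase p := by
  intro k
  induction k using Nat.strong_induction_on with
  | _ k ih =>
    match k with
    | 0 =>
      rw [fpSeq_zero]
      apply pvars_dsub
      · intro i; simp [pvars]
      · exact Finset.erase_subset_erase p (pvars_eraseT A 0)
    | m + 1 =>
      rw [fpSeq_succ]
      apply pvars_dsub
      · intro i
        match i with
        | 0 => simp [pvars]
        | j + 1 => exact ih (m - j) (by omega)
      · exact Finset.erase_subset_erase p (pvars_eraseT A (m + 1))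

end PropML

open PropML PropML.PF in
/-- de Jongh–Sambin fixed-point theorem for K + □^{n+1}⊥ with the explicit
algorithm: A_n is a fixed point of A(p), and contains only propositional variables of A
other than p. -/
theorem stmt4 (n p : ℕ) (A : PF) (hmod : Modalized p A) :
    Kn n ((fpSeq p A n).iff (A.psub p (fpSeq p A n))) ∧
    (fpSeq p A n).pvars ⊆ A.pvars.erase p := by
  constructor
  · obtain ⟨C, hC⟩ : ∃ C, fpSeq p A n = C := ⟨_, rfl⟩
    rw [hC, psub_eq_dsub]
    have h1 : Kn n ((((eraseT n A).dsub p (fun _ => C))).iff (A.dsub p (fun _ => C))) :=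
      eraseT_iff n p A 0 n (fun _ => C) (by omega)
    have h2 : Kn n (((eraseT n A).dsub p (sig p A n)).iff
        ((eraseT n A).dsub p (fun _ => C))) := by
      apply dsub_iff n p (eraseT n A) 0
      intro i hi
      obtain ⟨hiA, hin⟩ := occursAt_eraseT p A n i hi
      match i with
      | 0 => exact absurd hiA hmod
      | i + 1 =>
        have h := fp_agree n p A hmod (n - (i + 1)) n (by omega) le_rfl
        rw [show n - (n - (i + 1)) = i + 1 by omega, hC] at h
        simpa [sig] using h
    have key := transB 0 h2 h1
    rw [show (eraseT n A).dsub p (sig p A n) = C from (fpSeq_eq p A n).symm.trans hC] at key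
    exact key
  · exact fpSeq_pvars n p A n
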